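/- If a permutation w ∈ S_n avoids the pattern 3412, contains the pattern 321 exactly once, and avoids the pattern 25314, then w avoids all 21 of the following patterns: 24531, 25314, 25341, 34512, 34521, 35412, 35421, 42531, 45123, 45213, 45231, 45312, 52314, 52341, 53124, 53142, 53412, 53421, 54123, 54213, 54231. -/
import Mathlib


/-- Build a permutation of `Fin 5` from its one-line notation (0-indexed values). -/
noncomputable def mk5 (v : Fin 5 → Fin 5) (h : Function.Bijective v := by decide) :
    Equiv.Perm (Fin 5) := Equiv.ofBijective v h

/-- `w` contains the pattern `σ`. -/
def ContainsPat {n k : ℕ} (w : Equiv.Perm (Fin n)) (σ : Equiv.Perm (Fin k)) : Prop :=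
  ∃ f : Fin k ↪o Fin n, ∀ a b : Fin k, σ a < σ b ↔ w (f a) < w (f b)

/-- `w` contains the pattern 3412 at the index set given by `f`. -/
def Occ3412 {n : ℕ} (w : Equiv.Perm (Fin n)) (f : Fin 4 ↪o Fin n) : Prop :=
  w (f 2) < w (f 3) ∧ w (f 3) < w (f 0) ∧ w (f 0) < w (f 1)

/-- `w` contains the pattern 321 at the index set given by `f`. -/
def Occ321 {n : ℕ} (w : Equiv.Perm (Fin n)) (f : Fin 3 ↪o Fin n) : Prop :=
  w (f 2) < w (f 1) ∧ w (f 1) < w (f 0)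

noncomputable def e3 (v : Fin 3 → Fin 5) (h : StrictMono v := by decide) : Fin 3 ↪o Fin 5 :=
  OrderEmbedding.ofStrictMono v h

noncomputable def e4 (v : Fin 4 → Fin 5) (h : StrictMono v := by decide) : Fin 4 ↪o Fin 5 :=
  OrderEmbedding.ofStrictMono v h

lemma via3412 {n : ℕ} (w : Equiv.Perm (Fin n)) (h1 : ¬ ∃ f : Fin 4 ↪o Fin n, Occ3412 w f)
    (σ : Equiv.Perm (Fin 5)) (g : Fin 4 ↪o Fin 5)
    (hg : σ (g 2) < σ (g 3) ∧ σ (g 3) < σ (g 0) ∧ σ (g 0) < σ (g 1)) :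
    ¬ ContainsPat w σ := by
  rintro ⟨f, hf⟩
  exact h1 ⟨g.trans f, (hf _ _).mp hg.1, (hf _ _).mp hg.2.1, (hf _ _).mp hg.2.2⟩

lemma via321 {n : ℕ} (w : Equiv.Perm (Fin n)) (h2 : ∃! f : Fin 3 ↪o Fin n, Occ321 w f)
    (σ : Equiv.Perm (Fin 5)) (g1 g2 : Fin 3 ↪o Fin 5) (hne : ∃ i, g1 i ≠ g2 i)
    (hg1 : σ (g1 2) < σ (g1 1) ∧ σ (g1 1) < σ (g1 0))
    (hg2 : σ (g2 2) < σ (g2 1) ∧ σ (g2 1) < σ (g2 0)) :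
    ¬ ContainsPat w σ := by
  rintro ⟨f, hf⟩
  obtain ⟨f0, _, hu⟩ := h2
  have e1 := hu (g1.trans f) ⟨(hf _ _).mp hg1.1, (hf _ _).mp hg1.2⟩
  have e2 := hu (g2.trans f) ⟨(hf _ _).mp hg2.1, (hf _ _).mp hg2.2⟩
  obtain ⟨i, hi⟩ := hne
  have heq : f (g1 i) = f (g2 i) := by
    have := e1.trans e2.symm
    exact congrArg (fun (e : Fin 3 ↪o Fin n) => e i) this
  exact hi (f.injective heq)

/-- If `w` avoids the pattern 3412, contains the pattern 321 exactly once, and avoids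
the pattern 25314, then `w` avoids all 21 listed patterns. -/
theorem stmt4 {n : ℕ} (w : Equiv.Perm (Fin n))
    (h1 : ¬ ∃ f : Fin 4 ↪o Fin n, Occ3412 w f)
    (h2 : ∃! f : Fin 3 ↪o Fin n, Occ321 w f)
    (h3 : ¬ ContainsPat w (mk5 ![1,4,2,0,3])) :
    ∀ σ ∈ [mk5 ![1,3,4,2,0], mk5 ![1,4,2,0,3], mk5 ![1,4,2,3,0], mk5 ![2,3,4,0,1],
           mk5 ![2,3,4,1,0], mk5 ![2,4,3,0,1], mk5 ![2,4,3,1,0], mk5 ![3,1,4,2,0],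
           mk5 ![3,4,0,1,2], mk5 ![3,4,1,0,2], mk5 ![3,4,1,2,0], mk5 ![3,4,2,0,1],
           mk5 ![4,1,2,0,3], mk5 ![4,1,2,3,0], mk5 ![4,2,0,1,3], mk5 ![4,2,0,3,1],
           mk5 ![4,2,3,0,1], mk5 ![4,2,3,1,0], mk5 ![4,3,0,1,2], mk5 ![4,3,1,0,2],
           mk5 ![4,3,1,2,0]],
      ¬ ContainsPat w σ := by
  intro s hs
  fin_cases hs
  · exact via321 w h2 _ (e3 ![1,3,4]) (e3 ![2,3,4]) (by simp [e3] <;> decide) (by simp [mk5, e3] <;> decide) (by simp [mk5, e3] <;> decide)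
  · exact h3
  · exact via321 w h2 _ (e3 ![1,2,4]) (e3 ![1,3,4]) (by simp [e3] <;> decide) (by simp [mk5, e3] <;> decide) (by simp [mk5, e3] <;> decide)
  · exact via3412 w h1 _ (e4 ![0,1,3,4]) (by simp [mk5, e4] <;> decide)
  · exact via321 w h2 _ (e3 ![0,3,4]) (e3 ![1,3,4]) (by simp [e3] <;> decide) (by simp [mk5, e3] <;> decide) (by simp [mk5, e3] <;> decide)
  · exact via3412 w h1 _ (e4 ![0,1,3,4]) (by simp [mk5, e4] <;> decide)
  · exact via321 w h2 _ (e3 ![0,3,4]) (e3 ![1,2,3]) (by simp [e3] <;> decide) (by simp [mk5, e3] <;> decide) (by simp [mk5, e3] <;> decide)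
  · exact via321 w h2 _ (e3 ![0,1,4]) (e3 ![0,3,4]) (by simp [e3] <;> decide) (by simp [mk5, e3] <;> decide) (by simp [mk5, e3] <;> decide)
  · exact via3412 w h1 _ (e4 ![0,1,2,3]) (by simp [mk5, e4] <;> decide)
  · exact via3412 w h1 _ (e4 ![0,1,2,4]) (by simp [mk5, e4] <;> decide)
  · exact via3412 w h1 _ (e4 ![0,1,2,3]) (by simp [mk5, e4] <;> decide)
  · exact via3412 w h1 _ (e4 ![0,1,3,4]) (by simp [mk5, e4] <;> decide)
  · exact via321 w h2 _ (e3 ![0,1,3]) (e3 ![0,2,3]) (by simp [e3] <;> decide) (by simp [mk5, e3] <;> decide) (by simp [mk5, e3] <;> decide)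
  · exact via321 w h2 _ (e3 ![0,1,4]) (e3 ![0,2,4]) (by simp [e3] <;> decide) (by simp [mk5, e3] <;> decide) (by simp [mk5, e3] <;> decide)
  · exact via321 w h2 _ (e3 ![0,1,2]) (e3 ![0,1,3]) (by simp [e3] <;> decide) (by simp [mk5, e3] <;> decide) (by simp [mk5, e3] <;> decide)
  · exact via321 w h2 _ (e3 ![0,1,2]) (e3 ![0,1,4]) (by simp [e3] <;> decide) (by simp [mk5, e3] <;> decide) (by simp [mk5, e3] <;> decide)
  · exact via3412 w h1 _ (e4 ![1,2,3,4]) (by simp [mk5, e4] <;> decide)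
  · exact via321 w h2 _ (e3 ![0,1,3]) (e3 ![0,1,4]) (by simp [e3] <;> decide) (by simp [mk5, e3] <;> decide) (by simp [mk5, e3] <;> decide)
  · exact via321 w h2 _ (e3 ![0,1,2]) (e3 ![0,1,3]) (by simp [e3] <;> decide) (by simp [mk5, e3] <;> decide) (by simp [mk5, e3] <;> decide)
  · exact via321 w h2 _ (e3 ![0,1,2]) (e3 ![0,1,3]) (by simp [e3] <;> decide) (by simp [mk5, e3] <;> decide) (by simp [mk5, e3] <;> decide)
  · exact via321 w h2 _ (e3 ![0,1,2]) (e3 ![0,1,3]) (by simp [e3] <;> decide) (by simp [mk5, e3] <;> decide) (by simp [mk5, e3] <;> decide)
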